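/- arXiv:1701.00637 — 2 statements merged into one kernel-verified Lean document; each statement's English description precedes it below -/
import Mathlib

section
/- For all lambda terms M and N, M*[x:=N*] β-reduces to (M[x:=N])*, and moreover the reduction can be done in at most |M*| − 1 steps. -/
inductive Lam : Type
  | var : ℕ → Lam
  | lam : Lam → Lam
  | app : Lam → Lam → Lam
  deriving DecidableEq

namespace Lam

/-- term size -/
def size : Lam → ℕ
  | var _ => 1
  | lam M => 1 + M.size
  | app M N => 1 + M.size + N.size

/-- lift (shift) free variables ≥ d by 1 -/
def lift (d : ℕ) : Lam → Lam
  | var n => if n < d then var n else var (n+1)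
  | lam M => lam (M.lift (d+1))
  | app M N => app (M.lift d) (N.lift d)

/-- capture-avoiding substitution of N for the free variable x (de Bruijn) -/
def subst : Lam → ℕ → Lam → Lam
  | var n, x, N => if n = x then N else if x < n then var (n-1) else var n
  | lam M, x, N => lam (M.subst (x+1) (N.lift 0))
  | app M P, x, N => app (M.subst x N) (P.subst x N)

/-- number of free occurrences of the variable x -/
def count : Lam → ℕ → ℕ
  | var n, x => if n = x then 1 else 0
  | lam M, x => M.count (x+1)
  | app M N, x => M.count x + N.count x

/-- one-step β-reduction -/
inductive Step : Lam → Lam → Prop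
  | beta (M N : Lam) : Step (app (lam M) N) (M.subst 0 N)
  | appL {M M' : Lam} (N : Lam) : Step M M' → Step (app M N) (app M' N)
  | appR (M : Lam) {N N' : Lam} : Step N N' → Step (app M N) (app M N')
  | abs {M M' : Lam} : Step M M' → Step (lam M) (lam M')

/-- many-step β-reduction (reflexive-transitive closure) -/
def Red : Lam → Lam → Prop := Relation.ReflTransGen Step

/-- n-step β-reduction -/
def Steps : ℕ → Lam → Lam → Prop
  | 0, M, N => M = N
  | n+1, M, N => ∃ P, Step M P ∧ Steps n P N

/-- Takahashi translation (Gross-Knuth complete development) -/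
def star : Lam → Lam
  | var n => var n
  | lam M => lam (star M)
  | app (lam M) N => (star M).subst 0 (star N)
  | app (var n) N => app (var n) (star N)
  | app (app M₁ M₂) N => app (star (app M₁ M₂)) (star N)

/-- iterated Takahashi translation M^(n*) -/
def iterStar (n : ℕ) (M : Lam) : Lam := star^[n] M

set_option linter.unnecessarySeqFocus false
set_option linter.dupNamespace false

lemma lift_var_lt {n d : ℕ} (h : n < d) : lift d (var n) = var n := by
  simp [lift, h]

lemma lift_var_ge {n d : ℕ} (h : d ≤ n) : lift d (var n) = var (n+1) := by
  simp [lift, Nat.not_lt.2 h]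

lemma subst_var_eq (x : ℕ) (N : Lam) : (var x).subst x N = N := by simp [subst]

lemma subst_var_gt {n x : ℕ} (h : x < n) (N : Lam) : (var n).subst x N = var (n-1) := by
  rw [subst, if_neg (by omega), if_pos h]

lemma subst_var_lt {n x : ℕ} (h : n < x) (N : Lam) : (var n).subst x N = var n := by
  rw [subst, if_neg (by omega), if_neg (by omega)]

lemma size_pos (M : Lam) : 1 ≤ M.size := by
  induction M <;> simp [size] <;> omega

lemma size_lift (d : ℕ) (M : Lam) : (M.lift d).size = M.size := by
  induction M generalizing d with
  | var n =>
    by_cases h : n < d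
    · rw [lift_var_lt h]
    · rw [lift_var_ge (by omega)]; rfl
  | lam M ih => simp [lift, size, ih]
  | app M P ih1 ih2 => simp [lift, size, ih1, ih2]

lemma lift_lift (M : Lam) {d e : ℕ} (h : d ≤ e) :
    (M.lift d).lift (e+1) = (M.lift e).lift d := by
  induction M generalizing d e with
  | var n =>
    by_cases h1 : n < d
    · rw [lift_var_lt h1, lift_var_lt (by omega), lift_var_lt (by omega), lift_var_lt h1]
    · by_cases h2 : n < e
      · rw [lift_var_ge (by omega), lift_var_lt (by omega), lift_var_lt h2,
          lift_var_ge (by omega)]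
      · rw [lift_var_ge (by omega), lift_var_ge (by omega), lift_var_ge (by omega),
          lift_var_ge (by omega)]
  | lam M ih => simp [lift]; exact ih (by omega)
  | app M P ih1 ih2 => simp [lift]; exact ⟨ih1 h, ih2 h⟩

lemma lift_subst (M N : Lam) {x d : ℕ} (h : x ≤ d) :
    (M.subst x N).lift d = (M.lift (d+1)).subst x (N.lift d) := by
  induction M generalizing N x d with
  | var n =>
    rcases Nat.lt_trichotomy n x with hc | hc | hc
    · rw [subst_var_lt hc, lift_var_lt (by omega), lift_var_lt (by omega),
        subst_var_lt hc]
    · subst hc; rw [subst_var_eq, lift_var_lt (by omega), subst_var_eq]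
    · by_cases h2 : n ≤ d
      · rw [subst_var_gt hc, lift_var_lt (by omega), lift_var_lt (by omega),
          subst_var_gt hc]
      · rw [subst_var_gt hc, lift_var_ge (by omega), lift_var_ge (by omega),
          subst_var_gt (by omega)]
        congr 1; omega
  | lam M ih =>
    simp only [subst, lift, lam.injEq]
    rw [ih (N.lift 0) (by omega : x+1 ≤ d+1), lift_lift N (Nat.zero_le d)]
  | app M P ih1 ih2 => simp [subst, lift, ih1 N h, ih2 N h]

lemma lift_subst' (M N : Lam) {x d : ℕ} (h : d ≤ x) :
    (M.subst x N).lift d = (M.lift d).subst (x+1) (N.lift d) := by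
  induction M generalizing N x d with
  | var n =>
    rcases Nat.lt_trichotomy n x with hc | hc | hc
    · by_cases h2 : n < d
      · rw [subst_var_lt hc, lift_var_lt h2, subst_var_lt (by omega)]
      · rw [subst_var_lt hc, lift_var_ge (by omega : d ≤ n), subst_var_lt (by omega)]
    · subst hc; rw [subst_var_eq, lift_var_ge h, subst_var_eq]
    · rw [subst_var_gt hc, lift_var_ge (by omega), lift_var_ge (by omega),
        subst_var_gt (by omega)]
      congr 1; omega
  | lam M ih =>
    simp only [subst, lift, lam.injEq]
    rw [ih (N.lift 0) (by omega : d+1 ≤ x+1), lift_lift N (Nat.zero_le d)]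
  | app M P ih1 ih2 => simp [subst, lift, ih1 N h, ih2 N h]

lemma subst_lift (M N : Lam) (x : ℕ) : (M.lift x).subst x N = M := by
  induction M generalizing N x with
  | var n =>
    by_cases h : n < x
    · rw [lift_var_lt h, subst_var_lt h]
    · rw [lift_var_ge (by omega), subst_var_gt (by omega)]; congr 1
  | lam M ih => simp [lift, subst, ih]
  | app M P ih1 ih2 => simp [lift, subst, ih1, ih2]

lemma subst_subst (M Q B : Lam) {y x : ℕ} (h : y ≤ x) :
    (M.subst y Q).subst x B = (M.subst (x+1) (B.lift y)).subst y (Q.subst x B) := by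
  induction M generalizing Q B y x with
  | var n =>
    rcases Nat.lt_trichotomy n y with hc | hc | hc
    · rw [subst_var_lt hc, subst_var_lt (by omega), subst_var_lt (by omega),
        subst_var_lt hc]
    · subst hc
      rw [subst_var_eq, subst_var_lt (by omega), subst_var_eq]
    · rcases Nat.lt_trichotomy n (x+1) with hc2 | hc2 | hc2
      · rw [subst_var_gt hc, subst_var_lt (by omega), subst_var_lt hc2,
          subst_var_gt hc]
      · subst hc2
        rw [subst_var_gt hc, Nat.add_sub_cancel, subst_var_eq, subst_var_eq, subst_lift]
      · rw [subst_var_gt hc, subst_var_gt (by omega), subst_var_gt (by omega),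
          subst_var_gt (by omega)]
  | lam M ih =>
    simp only [subst, lam.injEq]
    rw [ih (Q.lift 0) (B.lift 0) (by omega : y+1 ≤ x+1), lift_lift B (Nat.zero_le y),
      ← lift_subst' Q B (Nat.zero_le x)]
  | app M P ih1 ih2 => simp [subst, ih1 Q B h, ih2 Q B h]


lemma count_lift {M : Lam} {d y : ℕ} (h : d ≤ y) :
    count (M.lift d) (y+1) = count M y := by
  induction M generalizing d y with
  | var n =>
    by_cases h1 : n < d
    · rw [lift_var_lt h1]; simp only [count]
      rw [if_neg (by omega), if_neg (by omega)]
    · rw [lift_var_ge (by omega)]; simp [count]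
  | lam M ih => simp only [lift, count]; exact ih (by omega)
  | app M P ih1 ih2 => simp [lift, count, ih1 h, ih2 h]

lemma count_lift_self (M : Lam) (y : ℕ) : count (M.lift y) y = 0 := by
  induction M generalizing y with
  | var n =>
    by_cases h1 : n < y
    · rw [lift_var_lt h1]; simp [count]; omega
    · rw [lift_var_ge (by omega)]; simp [count]; omega
  | lam M ih => simp only [lift, count]; exact ih (y+1)
  | app M P ih1 ih2 => simp [lift, count, ih1, ih2]

lemma count_subst_zero {M D : Lam} {y x : ℕ} (h : y < x) (hD : count D y = 0) :
    count (M.subst x D) y = count M y := by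
  induction M generalizing D y x with
  | var n =>
    rcases Nat.lt_trichotomy n x with hc | hc | hc
    · rw [subst_var_lt hc]
    · subst hc; rw [subst_var_eq, hD]; simp only [count]
      rw [if_neg (by omega)]
    · rw [subst_var_gt hc]; simp [count]
      rw [if_neg (by omega), if_neg (by omega)]
  | lam M ih =>
    simp only [subst, count]
    exact ih (by omega) (by rw [count_lift (Nat.zero_le y)]; exact hD)
  | app M P ih1 ih2 => simp [subst, count, ih1 h hD, ih2 h hD]

lemma size_subst (M N : Lam) (x : ℕ) :
    (M.subst x N).size + M.count x = M.size + M.count x * N.size := by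
  induction M generalizing N x with
  | var n =>
    rcases Nat.lt_trichotomy n x with hc | hc | hc
    · rw [subst_var_lt hc]; simp only [count, size]
      rw [if_neg (by omega)]; omega
    · subst hc; rw [subst_var_eq]; simp [count, size]; omega
    · rw [subst_var_gt hc]; simp only [count, size]
      rw [if_neg (by omega)]; omega
  | lam M ih =>
    simp only [subst, size, count]
    have := ih (N.lift 0) (x+1)
    rw [size_lift] at this; omega
  | app M P ih1 ih2 =>
    simp only [subst, size, count]
    have h1 := ih1 N x; have h2 := ih2 N x
    have := Nat.add_mul (M.count x) (P.count x) N.size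
    omega

lemma star_lift (M : Lam) (d : ℕ) : (M.lift d).star = M.star.lift d := by
  induction M using star.induct generalizing d with
  | case1 n =>
    by_cases h : n < d
    · rw [lift_var_lt h, star, lift_var_lt h]
    · rw [lift_var_ge (by omega), star, star, lift_var_ge (by omega)]
  | case2 M ih => simp only [lift, star, ih]
  | case3 M N ih1 ih2 =>
    simp only [lift, star, ih1, ih2]
    rw [← lift_subst M.star N.star (Nat.zero_le d)]
  | case4 n N ih =>
    simp only [lift]
    by_cases h : n < d
    · rw [if_pos h]; simp only [star, ih, lift, if_pos h]
    · rw [if_neg h]; simp only [star, ih, lift, if_neg h]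
  | case5 a b N ih1 ih2 =>
    have h1 := ih1 d
    simp only [lift] at h1
    simp only [lift, star, ih2, h1]

lemma step_lift {A B : Lam} (h : Step A B) (d : ℕ) : Step (A.lift d) (B.lift d) := by
  induction h generalizing d with
  | beta P Q =>
    rw [lift_subst P Q (Nat.zero_le d)]
    exact Step.beta (P.lift (d+1)) (Q.lift d)
  | appL N _ ih => exact Step.appL _ (ih d)
  | appR M _ ih => exact Step.appR _ (ih d)
  | abs _ ih => exact Step.abs (ih (d+1))

lemma step_subst {A B : Lam} (h : Step A B) (x : ℕ) (C : Lam) :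
    Step (A.subst x C) (B.subst x C) := by
  induction h generalizing x C with
  | beta P Q =>
    rw [subst_subst P Q C (Nat.zero_le x)]
    exact Step.beta _ _
  | appL N _ ih => exact Step.appL _ (ih x C)
  | appR M _ ih => exact Step.appR _ (ih x C)
  | abs _ ih => exact Step.abs (ih (x+1) (C.lift 0))

lemma steps_trans {m n : ℕ} {A B C : Lam} (h1 : Steps m A B) (h2 : Steps n B C) :
    Steps (m + n) A C := by
  induction m generalizing A with
  | zero =>
    have h1' : A = B := h1
    subst h1'
    rw [Nat.zero_add]; exact h2
  | succ m ih =>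
    have h1' : ∃ P, Step A P ∧ Steps m P B := h1
    obtain ⟨P, hs, hrest⟩ := h1'
    rw [show m + 1 + n = (m + n) + 1 from by omega]
    exact ⟨P, hs, ih hrest⟩

lemma steps_map {m : ℕ} {A B : Lam} (f : Lam → Lam)
    (hf : ∀ {X Y}, Step X Y → Step (f X) (f Y)) (h : Steps m A B) :
    Steps m (f A) (f B) := by
  induction m generalizing A with
  | zero =>
    have h' : A = B := h
    subst h'; rfl
  | succ m ih =>
    have h' : ∃ P, Step A P ∧ Steps m P B := h
    obtain ⟨P, hs, hrest⟩ := h'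
    exact ⟨f P, hf hs, ih hrest⟩

lemma steps_appL {m : ℕ} {A A' : Lam} (B : Lam) (h : Steps m A A') :
    Steps m (app A B) (app A' B) :=
  steps_map (fun X => app X B) (fun hs => Step.appL B hs) h

lemma steps_appR {m : ℕ} (A : Lam) {B B' : Lam} (h : Steps m B B') :
    Steps m (app A B) (app A B') :=
  steps_map (fun X => app A X) (fun hs => Step.appR A hs) h

lemma steps_abs {m : ℕ} {A A' : Lam} (h : Steps m A A') :
    Steps m (lam A) (lam A') :=
  steps_map lam (fun hs => Step.abs hs) h

lemma steps_subst_left {m : ℕ} {A A' : Lam} (x : ℕ) (C : Lam) (h : Steps m A A') :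
    Steps m (A.subst x C) (A'.subst x C) :=
  steps_map (fun X => X.subst x C) (fun hs => step_subst hs x C) h

lemma steps_lift {m : ℕ} {A A' : Lam} (d : ℕ) (h : Steps m A A') :
    Steps m (A.lift d) (A'.lift d) :=
  steps_map (fun X => X.lift d) (fun hs => step_lift hs d) h

lemma steps_subst_right (A : Lam) {m : ℕ} {B B' : Lam} (x : ℕ) (h : Steps m B B') :
    Steps (A.count x * m) (A.subst x B) (A.subst x B') := by
  induction A generalizing B B' x with
  | var n =>
    rcases Nat.lt_trichotomy n x with hc | hc | hc
    · rw [subst_var_lt hc, subst_var_lt hc]; simp [count]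
      rw [if_neg (by omega)]; simp [Steps]
    · subst hc; rw [subst_var_eq, subst_var_eq]; simpa [count] using h
    · rw [subst_var_gt hc, subst_var_gt hc]; simp [count]
      rw [if_neg (by omega)]; simp [Steps]
  | lam A ih =>
    simp only [subst, count]
    exact steps_abs (ih (x+1) (steps_lift 0 h))
  | app A P ih1 ih2 =>
    simp only [subst, count, Nat.add_mul]
    exact steps_trans (steps_appL _ (ih1 x h)) (steps_appR _ (ih2 x h))

lemma steps_red {m : ℕ} {A B : Lam} (h : Steps m A B) : Red A B := by
  induction m generalizing A with
  | zero =>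
    have h' : A = B := h
    subst h'; exact Relation.ReflTransGen.refl
  | succ m ih =>
    have h' : ∃ P, Step A P ∧ Steps m P B := h
    obtain ⟨P, hs, hrest⟩ := h'
    exact Relation.ReflTransGen.head hs (ih hrest)


lemma steps_of_eq {A B : Lam} (h : A = B) : Steps 0 A B := h

lemma steps_one {A B : Lam} (h : Step A B) : Steps 1 A B := ⟨B, h, rfl⟩

theorem star_subst_aux : ∀ (M N : Lam) (x : ℕ),
    ∃ l, Steps l (M.star.subst x N.star) ((M.subst x N).star) ∧ l + 1 ≤ M.star.size
  | var n, N, x => by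
    rcases Nat.lt_trichotomy n x with hc | hc | hc
    · exact ⟨0, steps_of_eq (by rw [star, subst_var_lt hc, subst_var_lt hc, star]),
        by simp [star, size]⟩
    · subst hc
      exact ⟨0, steps_of_eq (by rw [star, subst_var_eq, subst_var_eq]),
        by simp [star, size]⟩
    · exact ⟨0, steps_of_eq (by rw [star, subst_var_gt hc, subst_var_gt hc, star]),
        by simp [star, size]⟩
  | lam M₀, N, x => by
    obtain ⟨l, hs, hb⟩ := star_subst_aux M₀ (N.lift 0) (x+1)
    refine ⟨l, ?_, ?_⟩
    · simp only [star, subst]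
      rw [star_lift N 0] at hs
      exact steps_abs hs
    · simp only [star, size]; omega
  | app (var n) M₂, N, x => by
    obtain ⟨l2, hs2, hb2⟩ := star_subst_aux M₂ N x
    by_cases hnx : n = x
    · subst hnx
      match N with
      | lam N₀ =>
        refine ⟨l2 + 1, ?_, ?_⟩
        · simp only [star, subst, subst_var_eq]
          exact steps_trans (steps_appR _ hs2) (steps_one (Step.beta _ _))
        · simp only [star, size]; omega
      | var m =>
        refine ⟨l2, ?_, ?_⟩
        · simp only [star, subst, subst_var_eq]
          exact steps_appR _ hs2
        · simp only [star, size]; omega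
      | app a b =>
        refine ⟨l2, ?_, ?_⟩
        · simp only [star, subst, subst_var_eq]
          exact steps_appR _ hs2
        · simp only [star, size]; omega
    · refine ⟨l2, ?_, ?_⟩
      · simp only [star, subst]
        rw [if_neg hnx, if_neg hnx]
        by_cases hlt : x < n
        · rw [if_pos hlt]
          simp only [star]
          exact steps_appR _ hs2
        · rw [if_neg hlt]
          simp only [star]
          exact steps_appR _ hs2
      · simp only [star, size]; omega
  | app (lam M₀) M₂, N, x => by
    obtain ⟨l1, hs1, hb1⟩ := star_subst_aux M₀ (N.lift 0) (x+1)
    obtain ⟨l2, hs2, hb2⟩ := star_subst_aux M₂ N x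
    have hc0 : count ((N.lift 0).star) 0 = 0 := by
      rw [star_lift]; exact count_lift_self N.star 0
    have hcnt : count (M₀.star.subst (x+1) ((N.lift 0).star)) 0 = count M₀.star 0 :=
      count_subst_zero (by omega) hc0
    refine ⟨count M₀.star 0 * l2 + l1, ?_, ?_⟩
    · simp only [star, subst]
      rw [subst_subst M₀.star M₂.star N.star (Nat.zero_le x), ← star_lift N 0]
      refine steps_trans ?_ (steps_subst_left 0 _ hs1)
      have := steps_subst_right (M₀.star.subst (x+1) ((N.lift 0).star)) 0 hs2
      rwa [hcnt] at this
    · have hsz := size_subst M₀.star M₂.star 0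
      have hmul : count M₀.star 0 * (l2 + 1) ≤ count M₀.star 0 * M₂.star.size :=
        Nat.mul_le_mul_left _ hb2
      rw [Nat.mul_succ] at hmul
      simp only [star]
      omega
  | app (app a b) M₂, N, x => by
    obtain ⟨l1, hs1, hb1⟩ := star_subst_aux (app a b) N x
    obtain ⟨l2, hs2, hb2⟩ := star_subst_aux M₂ N x
    refine ⟨l1 + l2, ?_, ?_⟩
    · simp only [star, subst] at hs1 hs2 ⊢
      exact steps_trans (steps_appL _ hs1) (steps_appR _ hs2)
    · simp only [star, size] at hb1 ⊢
      omega
termination_by M _ _ => M.size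
decreasing_by all_goals simp [size] <;> omega

end Lam

/-- M*[x:=N*] ↠ (M[x:=N])*, in at most |M*| − 1 steps -/
theorem star_subst (M N : Lam) (x : ℕ) :
    Lam.Red (M.star.subst x N.star) ((M.subst x N).star) ∧
      ∃ l : ℕ, Lam.Steps l (M.star.subst x N.star) ((M.subst x N).star) ∧
        l ≤ M.star.size - 1 := by
  obtain ⟨l, hs, hb⟩ := Lam.star_subst_aux M N x
  exact ⟨Lam.steps_red hs, l, hs, by omega⟩
end

section
/- (Church-Rosser for β-equality via Takahashi translation) If M =β N, then there exists a common reduct of M and N of the form N^(l*) for some natural number l, i.e., M ↠ N^(l*) and N ↠ N^(l*). -/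
namespace Lam

theorem lift_lift_s11 (M : Lam) : ∀ i j, i ≤ j → (M.lift j).lift i = (M.lift i).lift (j+1) := by
  induction M with
  | var n =>
    intro i j h
    simp only [lift]
    split_ifs <;> simp only [lift] <;> split_ifs <;> first | rfl | omega
  | lam M ih =>
    intro i j h
    simp only [lift, ih (i+1) (j+1) (by omega)]
  | app M N ihM ihN =>
    intro i j h
    simp only [lift, ihM i j h, ihN i j h]

/-- lemma A: d ≤ x -/
theorem lift_subst_le (M : Lam) : ∀ d x (N : Lam), d ≤ x →
    (M.subst x N).lift d = (M.lift d).subst (x+1) (N.lift d) := by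
  induction M with
  | var n =>
    intro d x N h
    simp only [subst, lift]
    split_ifs <;> simp only [subst, lift] <;> split_ifs <;>
      first | rfl | omega | (exact absurd rfl (by omega)) | (congr 1; omega)
  | lam M ih =>
    intro d x N h
    simp only [subst, lift, ih (d+1) (x+1) (N.lift 0) (by omega)]
    rw [lift_lift_s11 N 0 d (by omega)]
  | app M P ihM ihP =>
    intro d x N h
    simp only [subst, lift, ihM d x N h, ihP d x N h]

/-- lemma B: x ≤ d -/
theorem lift_subst_ge (M : Lam) : ∀ d x (N : Lam), x ≤ d →
    (M.subst x N).lift d = (M.lift (d+1)).subst x (N.lift d) := by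
  induction M with
  | var n =>
    intro d x N h
    simp only [subst, lift]
    split_ifs <;> simp only [subst, lift] <;> split_ifs <;>
      first | rfl | omega | (exact absurd rfl (by omega)) | (congr 1; omega)
  | lam M ih =>
    intro d x N h
    simp only [subst, lift, ih (d+1) (x+1) (N.lift 0) (by omega)]
    rw [lift_lift_s11 N 0 d (by omega)]
  | app M P ihM ihP =>
    intro d x N h
    simp only [subst, lift, ihM d x N h, ihP d x N h]

theorem subst_lift_cancel (M : Lam) : ∀ x (N : Lam), (M.lift x).subst x N = M := by
  induction M with
  | var n =>
    intro x N
    simp only [lift]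
    split_ifs <;> simp only [subst] <;> split_ifs <;>
      first | rfl | omega | (exact absurd rfl (by omega)) | (congr 1; omega)
  | lam M ih =>
    intro x N
    simp only [lift, subst, ih (x+1) (N.lift 0)]
  | app M P ihM ihP =>
    intro x N
    simp only [lift, subst, ihM x N, ihP x N]

theorem subst_subst_s11 (M : Lam) : ∀ i j (P Q : Lam), i ≤ j →
    (M.subst i P).subst j Q = (M.subst (j+1) (Q.lift i)).subst i (P.subst j Q) := by
  induction M with
  | var n =>
    intro i j P Q h
    simp only [subst]
    split_ifs <;> (try simp only [subst]) <;> (try split_ifs) <;>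
      first
      | rfl
      | omega
      | (exfalso; omega)
      | (congr 1; omega)
      | (exact (subst_lift_cancel Q i (P.subst j Q)).symm)
  | lam M ih =>
    intro i j P Q h
    simp only [subst, ih (i+1) (j+1) (P.lift 0) (Q.lift 0) (by omega)]
    rw [lift_lift_s11 Q 0 i (by omega), lift_subst_le P 0 j Q (by omega)]
  | app M R ihM ihR =>
    intro i j P Q h
    simp only [subst, ihM i j P Q h, ihR i j P Q h]

/-- parallel reduction -/
inductive Par : Lam → Lam → Prop
  | var (n : ℕ) : Par (.var n) (.var n)
  | lam {M M'} : Par M M' → Par (.lam M) (.lam M')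
  | app {M M' N N'} : Par M M' → Par N N' → Par (.app M N) (.app M' N')
  | beta {M M' N N'} : Par M M' → Par N N' → Par (.app (.lam M) N) (M'.subst 0 N')

theorem Par.refl (M : Lam) : Par M M := by
  induction M with
  | var n => exact Par.var n
  | lam M ih => exact Par.lam ih
  | app M N ihM ihN => exact Par.app ihM ihN

theorem Par.lift {M M' : Lam} (h : Par M M') : ∀ d, Par (M.lift d) (M'.lift d) := by
  induction h with
  | var n => intro d; simp only [Lam.lift]; split_ifs <;> exact Par.refl _
  | lam _ ih => intro d; exact Par.lam (ih (d+1))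
  | app _ _ ihM ihN => intro d; exact Par.app (ihM d) (ihN d)
  | @beta M M' N N' _ _ ihM ihN =>
    intro d
    have := Par.beta (ihM (d+1)) (ihN d)
    rw [← lift_subst_ge M' d 0 N' (by omega)] at this
    exact this

theorem Par.subst_par {M M' : Lam} (h : Par M M') : ∀ x {N N' : Lam}, Par N N' →
    Par (M.subst x N) (M'.subst x N') := by
  induction h with
  | var n =>
    intro x N N' hN
    simp only [Lam.subst]
    split_ifs <;> first | exact hN | exact Par.refl _
  | lam _ ih => intro x N N' hN; exact Par.lam (ih (x+1) (hN.lift 0))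
  | app _ _ ihM ihN => intro x N N' hN; exact Par.app (ihM x hN) (ihN x hN)
  | @beta M M' P P' _ _ ihM ihP =>
    intro x N N' hN
    have := Par.beta (ihM (x+1) (hN.lift 0)) (ihP x hN)
    rw [← subst_subst_s11 M' 0 x P' N' (by omega)] at this
    exact this

theorem Par.lam_inv {M Q : Lam} (h : Par (.lam M) Q) : ∃ M', Q = .lam M' ∧ Par M M' := by
  cases h with
  | lam h => exact ⟨_, rfl, h⟩

theorem Par.triangle {M N : Lam} (h : Par M N) : Par N (star M) := by
  induction h with
  | var n => exact Par.var n
  | lam _ ih => exact Par.lam ih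
  | @app M M' N N' hM _ ihM ihN =>
    cases M with
    | var n =>
      cases hM with
      | var => exact Par.app ihM ihN
    | lam P =>
      obtain ⟨P', rfl, _⟩ := hM.lam_inv
      obtain ⟨P'', hP'', hPar⟩ := ihM.lam_inv
      simp only [star]
      cases hP''
      exact Par.beta hPar ihN
    | app P Q => exact Par.app ihM ihN
  | @beta M M' N N' _ _ ihM ihN =>
    simp only [star]
    exact ihM.subst_par 0 ihN

theorem Red.lam {M N : Lam} (h : Red M N) : Red (lam M) (lam N) :=
  Relation.ReflTransGen.lift Lam.lam (fun _ _ s => Step.abs s) _ _ h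

theorem Red.appL {M M' : Lam} (N : Lam) (h : Red M M') : Red (app M N) (app M' N) :=
  Relation.ReflTransGen.lift (fun X => app X N) (fun _ _ s => Step.appL N s) _ _ h

theorem Red.appR (M : Lam) {N N' : Lam} (h : Red N N') : Red (app M N) (app M N') :=
  Relation.ReflTransGen.lift (fun X => app M X) (fun _ _ s => Step.appR M s) _ _ h

theorem Par.red {M N : Lam} (h : Par M N) : Red M N := by
  induction h with
  | var n => exact Relation.ReflTransGen.refl
  | lam _ ih => exact ih.lam
  | app _ _ ihM ihN => exact Relation.ReflTransGen.trans (ihM.appL _) (Red.appR _ ihN)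
  | @beta M M' N N' _ _ ihM ihN =>
    have h1 : Red (.app (.lam M) N) (.app (.lam M') N') :=
      Relation.ReflTransGen.trans ((ihM.lam).appL _) (Red.appR _ ihN)
    exact h1.trans (Relation.ReflTransGen.single (Step.beta M' N'))

theorem Step.par {M N : Lam} (h : Step M N) : Par M N := by
  induction h with
  | beta M N => exact Par.beta (Par.refl M) (Par.refl N)
  | appL N _ ih => exact Par.app ih (Par.refl N)
  | appR M _ ih => exact Par.app (Par.refl M) ih
  | abs _ ih => exact Par.lam ih

theorem Par.star_mono {M N : Lam} (h : Par M N) : Par (star M) (star N) :=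
  h.triangle.triangle

theorem Par.iterStar_mono {M N : Lam} (h : Par M N) (k : ℕ) :
    Par (iterStar k M) (iterStar k N) := by
  induction k with
  | zero => exact h
  | succ k ih =>
    simp only [iterStar, Function.iterate_succ_apply'] at *
    exact ih.star_mono

theorem red_iterStar (M : Lam) (k : ℕ) : Red M (iterStar k M) := by
  induction k with
  | zero => exact Relation.ReflTransGen.refl
  | succ k ih =>
    simp only [iterStar, Function.iterate_succ_apply'] at *
    exact ih.trans (Par.refl _).triangle.red

theorem iterStar_mono_idx (M : Lam) {i j : ℕ} (h : i ≤ j) :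
    Red (iterStar i M) (iterStar j M) := by
  obtain ⟨k, rfl⟩ := Nat.exists_eq_add_of_le h
  have : iterStar (i + k) M = iterStar k (iterStar i M) := by
    simp [iterStar, ← Function.iterate_add_apply, Nat.add_comm]
  rw [this]
  exact red_iterStar _ k

theorem cofinal {M N : Lam} (h : Red M N) : ∃ k, Red N (iterStar k M) := by
  induction h using Relation.ReflTransGen.head_induction_on with
  | refl => exact ⟨0, Relation.ReflTransGen.refl⟩
  | head s _ ih =>
    obtain ⟨k, hk⟩ := ih
    rename_i M P _
    refine ⟨k + 1, hk.trans ?_⟩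
    have h1 : Par P (star M) := s.par.triangle
    have h2 : Par (iterStar k P) (iterStar k (star M)) := h1.iterStar_mono k
    have h3 : iterStar k (star M) = iterStar (k+1) M := by
      simp [iterStar, Function.iterate_succ_apply]
    rw [← h3]
    exact h2.red

end Lam

/-- Church-Rosser for β-equality: if M =β N then M and N have a
common reduct of the form N^(l*) -/
theorem church_rosser_eq {M N : Lam} (h : Relation.EqvGen Lam.Step M N) :
    ∃ l : ℕ, Lam.Red M (Lam.iterStar l N) ∧ Lam.Red N (Lam.iterStar l N) := by
  induction h with
  | rel M N s => exact ⟨0, Relation.ReflTransGen.single s, Relation.ReflTransGen.refl⟩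
  | refl M => exact ⟨0, Relation.ReflTransGen.refl, Relation.ReflTransGen.refl⟩
  | symm M N _ ih =>
    obtain ⟨l, hM, hN⟩ := ih
    obtain ⟨k, hk⟩ := Lam.cofinal hM
    exact ⟨k, hN.trans hk, hM.trans hk⟩
  | trans M N P _ _ ih1 ih2 =>
    obtain ⟨l1, hM1, hN1⟩ := ih1
    obtain ⟨l2, hN2, hP2⟩ := ih2
    obtain ⟨k, hk⟩ := Lam.cofinal hN2
    set j := max l1 k with hj
    have h1 : Lam.Red (Lam.iterStar l1 N) (Lam.iterStar j N) :=
      Lam.iterStar_mono_idx N (le_max_left _ _)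
    have h2 : Lam.Red (Lam.iterStar k N) (Lam.iterStar j N) :=
      Lam.iterStar_mono_idx N (le_max_right _ _)
    have hMj : Lam.Red M (Lam.iterStar j N) := hM1.trans h1
    have hPj : Lam.Red P (Lam.iterStar j N) := hP2.trans (hk.trans h2)
    obtain ⟨m, hm⟩ := Lam.cofinal hPj
    exact ⟨m, hMj.trans hm, hPj.trans hm⟩
end
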